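/- The broadcasting process is non-reconstructible on 𝕋 if and only if lim_{n→∞} x_{n;θ} = 0 and lim_{n→∞} x_{n;1−θ} = 0. -/

import Mathlib

open Finset Filter

namespace Broadcast

/-- The root distribution `π = (θ/2, θ/2, (1-θ)/2, (1-θ)/2)`. -/
noncomputable def rootDist (θ : ℝ) (i : Fin 4) : ℝ :=
  if (i : ℕ) < 2 then θ / 2 else (1 - θ) / 2

/-- The transition matrix `P i j = λ · 1{i=j} + (1-λ) π_j`. -/
noncomputable def trans (θ lam : ℝ) (i j : Fin 4) : ℝ :=
  (if i = j then lam else 0) + (1 - lam) * rootDist θ j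

/-- Vertices at level `n` of the infinite rooted `d`-ary tree, encoded as paths. -/
abbrev Vtx (d n : ℕ) := Fin n → Fin d

/-- Configurations (assignments of states) on level `n`. -/
abbrev Config (d n : ℕ) := Vtx d n → Fin 4

/-- Restriction of a level-`(n+1)` configuration to the subtree of the `j`-th child
of the root. -/
def restrict {d n : ℕ} (j : Fin d) (A : Config d (n + 1)) : Config d n :=
  fun p => A (Fin.cons j p)

/-- `lik θ λ d n i A` is the probability of observing the configuration `A` on level `n`,
given that the root is in state `i` (the broadcasting process). -/
noncomputable def lik (θ lam : ℝ) (d : ℕ) : (n : ℕ) → Fin 4 → Config d n → ℝ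
  | 0, i, A => if A Fin.elim0 = i then 1 else 0
  | n + 1, i, A =>
      ∏ j : Fin d, ∑ k : Fin 4, trans θ lam i k * lik θ lam d n k (restrict j A)

/-- Unconditional probability of observing the configuration `A` on level `n`. -/
noncomputable def marg (θ lam : ℝ) (d n : ℕ) (A : Config d n) : ℝ :=
  ∑ i : Fin 4, rootDist θ i * lik θ lam d n i A

/-- The posterior `f_n(i, A) = P(σ_ρ = i ∣ σ(n) = A)`. -/
noncomputable def post (θ lam : ℝ) (d n : ℕ) (i : Fin 4) (A : Config d n) : ℝ :=
  rootDist θ i * lik θ lam d n i A / marg θ lam d n A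

/-- Expectation of `g(σ(n))` conditioned on the root being in state `r`,
i.e. `E g(σ^r(n))`. -/
noncomputable def condE (θ lam : ℝ) (d n : ℕ) (r : Fin 4) (g : Config d n → ℝ) : ℝ :=
  ∑ A : Config d n, lik θ lam d n r A * g A

/-- Unconditional expectation of `g(σ(n))`. -/
noncomputable def uncondE (θ lam : ℝ) (d n : ℕ) (g : Config d n → ℝ) : ℝ :=
  ∑ A : Config d n, marg θ lam d n A * g A

/-- `x_{n;θ} = E f_n(1, σ¹(n)) - θ/2`. -/
noncomputable def xT (θ lam : ℝ) (d n : ℕ) : ℝ :=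
  condE θ lam d n 0 (fun A => post θ lam d n 0 A) - θ / 2

/-- `y_{n;θ} = E f_n(2, σ¹(n)) - θ/2`. -/
noncomputable def yT (θ lam : ℝ) (d n : ℕ) : ℝ :=
  condE θ lam d n 0 (fun A => post θ lam d n 1 A) - θ / 2

/-- `z_{n;θ} = E f_n(1, σ³(n)) - θ/2`. -/
noncomputable def zT (θ lam : ℝ) (d n : ℕ) : ℝ :=
  condE θ lam d n 2 (fun A => post θ lam d n 0 A) - θ / 2

/-- `x_{n;1-θ} = E f_n(3, σ³(n)) - (1-θ)/2`. -/
noncomputable def xH (θ lam : ℝ) (d n : ℕ) : ℝ :=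
  condE θ lam d n 2 (fun A => post θ lam d n 2 A) - (1 - θ) / 2

/-- `y_{n;1-θ} = E f_n(4, σ³(n)) - (1-θ)/2`. -/
noncomputable def yH (θ lam : ℝ) (d n : ℕ) : ℝ :=
  condE θ lam d n 2 (fun A => post θ lam d n 3 A) - (1 - θ) / 2

/-- `z_{n;1-θ} = E f_n(3, σ¹(n)) - (1-θ)/2`. -/
noncomputable def zH (θ lam : ℝ) (d n : ℕ) : ℝ :=
  condE θ lam d n 0 (fun A => post θ lam d n 2 A) - (1 - θ) / 2

/-- `u_{n;θ} = E (f_n(1, σ¹(n)) - θ/2)²`. -/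
noncomputable def uT (θ lam : ℝ) (d n : ℕ) : ℝ :=
  condE θ lam d n 0 (fun A => (post θ lam d n 0 A - θ / 2) ^ 2)

/-- `v_{n;θ} = E (f_n(2, σ¹(n)) - θ/2)²`. -/
noncomputable def vT (θ lam : ℝ) (d n : ℕ) : ℝ :=
  condE θ lam d n 0 (fun A => (post θ lam d n 1 A - θ / 2) ^ 2)

/-- `w_{n;θ} = E (f_n(1, σ³(n)) - θ/2)²`. -/
noncomputable def wT (θ lam : ℝ) (d n : ℕ) : ℝ :=
  condE θ lam d n 2 (fun A => (post θ lam d n 0 A - θ / 2) ^ 2)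

/-- `w_{n;1-θ} = E (f_n(3, σ¹(n)) - (1-θ)/2)²`. -/
noncomputable def wH (θ lam : ℝ) (d n : ℕ) : ℝ :=
  condE θ lam d n 0 (fun A => (post θ lam d n 2 A - (1 - θ) / 2) ^ 2)

/-- `Y_{ij}(n) = f_n(i, σ_j(n+1))`, viewed as a function of the level-`(n+1)`
configuration. -/
noncomputable def Yf (θ lam : ℝ) (d n : ℕ) (i : Fin 4) (j : Fin d)
    (A : Config d (n + 1)) : ℝ :=
  post θ lam d n i (restrict j A)

/-- `Z_i(n)`, viewed as a function of the level-`(n+1)` configuration. -/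
noncomputable def Zf (θ lam : ℝ) (d n : ℕ) (i : Fin 4) (A : Config d (n + 1)) : ℝ :=
  if (i : ℕ) < 2 then
    ∏ j : Fin d, (1 + (2 * lam / θ) * (Yf θ lam d n i j A - θ / 2))
  else
    ∏ j : Fin d, (1 + (2 * lam / (1 - θ)) * (Yf θ lam d n i j A - (1 - θ) / 2))

/-- `S = (θ/2)Z₁ + (θ/2)Z₂ + ((1-θ)/2)Z₃ + ((1-θ)/2)Z₄`. -/
noncomputable def Sf (θ lam : ℝ) (d n : ℕ) (A : Config d (n + 1)) : ℝ :=
  θ / 2 * Zf θ lam d n 0 A + θ / 2 * Zf θ lam d n 1 A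
    + (1 - θ) / 2 * Zf θ lam d n 2 A + (1 - θ) / 2 * Zf θ lam d n 3 A

/-- Total variation distance between the laws of `σ^i(n)` and `σ^j(n)`. -/
noncomputable def dTV (θ lam : ℝ) (d n : ℕ) (i j : Fin 4) : ℝ :=
  (∑ A : Config d n, |lik θ lam d n i A - lik θ lam d n j A|) / 2

/-- The model is reconstructible if for some pair of root states the total variation
distance between the conditioned level-`n` configurations does not vanish. -/
def Reconstructible (θ lam : ℝ) (d : ℕ) : Prop :=
  ∃ i j : Fin 4, 0 < Filter.limsup (fun n => dTV θ lam d n i j) Filter.atTop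

/-- Probability that the root is in state `i` and the states at the vertices
`v 1, …, v k ∈ L(M)` are `c 1, …, c k`. -/
noncomputable def jointRootEvent (θ lam : ℝ) (d M k : ℕ) (v : Fin k → Vtx d M)
    (c : Fin k → Fin 4) (i : Fin 4) : ℝ :=
  ∑ A : Config d M,
    if ∀ t, A (v t) = c t then rootDist θ i * lik θ lam d M i A else 0

/-- Conditional probability `P(σ_ρ = i ∣ σ_{v t} = c t, 1 ≤ t ≤ k)`. -/
noncomputable def condRoot (θ lam : ℝ) (d M k : ℕ) (v : Fin k → Vtx d M)
    (c : Fin k → Fin 4) (i : Fin 4) : ℝ :=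
  jointRootEvent θ lam d M k v c i / ∑ i' : Fin 4, jointRootEvent θ lam d M k v c i'


section Aux

variable {θ lam : ℝ} {d : ℕ}

lemma rootDist_pos (hθ : θ ∈ Set.Ioo (0:ℝ) 1) (i : Fin 4) : 0 < rootDist θ i := by
  obtain ⟨h1, h2⟩ := hθ
  unfold rootDist; split <;> linarith

lemma rootDist_le_one (hθ : θ ∈ Set.Ioo (0:ℝ) 1) (i : Fin 4) : rootDist θ i ≤ 1 := by
  obtain ⟨h1, h2⟩ := hθ
  unfold rootDist; split <;> linarith

lemma sum_rootDist : ∑ i : Fin 4, rootDist θ i = 1 := by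
  have h0 : rootDist θ 0 = θ/2 := if_pos (by decide)
  have h1 : rootDist θ 1 = θ/2 := if_pos (by decide)
  have h2 : rootDist θ 2 = (1-θ)/2 := if_neg (by decide)
  have h3 : rootDist θ 3 = (1-θ)/2 := if_neg (by decide)
  rw [Fin.sum_univ_four, h0, h1, h2, h3]
  ring

lemma sum_trans (i : Fin 4) : ∑ j : Fin 4, trans θ lam i j = 1 := by
  unfold trans
  rw [Finset.sum_add_distrib, Finset.sum_ite_eq univ i (fun _ => lam), ← Finset.mul_sum,
    sum_rootDist]
  simp

lemma lik_nonneg (hP : ∀ i j : Fin 4, 0 ≤ trans θ lam i j) (n : ℕ) (i : Fin 4)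
    (A : Config d n) : 0 ≤ lik θ lam d n i A := by
  induction n generalizing i with
  | zero => unfold lik; split <;> norm_num
  | succ n ih =>
    unfold lik
    exact Finset.prod_nonneg fun j _ => Finset.sum_nonneg fun k _ =>
      mul_nonneg (hP i k) (ih k _)

def configEquiv (d n : ℕ) : Config d (n+1) ≃ (Fin d → Config d n) where
  toFun A j := restrict j A
  invFun B p := B (p 0) (Fin.tail p)
  left_inv A := funext fun p => by simp [restrict, Fin.cons_self_tail]
  right_inv B := funext fun j => funext fun p => by simp [restrict, Fin.tail_cons]

lemma sum_config_succ {n : ℕ} (F : Fin d → Config d n → ℝ) :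
    ∑ A : Config d (n+1), ∏ j : Fin d, F j (restrict j A)
      = ∏ j : Fin d, ∑ B : Config d n, F j B := by
  have h1 : ∑ A : Config d (n+1), ∏ j : Fin d, F j (restrict j A)
      = ∑ B : Fin d → Config d n, ∏ j : Fin d, F j (B j) :=
    Fintype.sum_equiv (configEquiv d n) _ _ (fun A => rfl)
  rw [h1, Finset.prod_univ_sum]
  simp [Fintype.piFinset_univ]

lemma sum_lik (n : ℕ) (i : Fin 4) : ∑ A : Config d n, lik θ lam d n i A = 1 := by
  induction n generalizing i with
  | zero =>
    have : ∀ A : Config d 0, lik θ lam d 0 i A = if A Fin.elim0 = i then 1 else 0 := fun A => rfl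
    simp_rw [this]
    have h1 : (∑ A : Config d 0, if A Fin.elim0 = i then (1:ℝ) else 0)
        = ∑ c : Fin 4, if c = i then (1:ℝ) else 0 :=
      Fintype.sum_equiv (Equiv.funUnique (Vtx d 0) (Fin 4)) _ _ (fun A => by
        simp only [Equiv.funUnique_apply]
        have hA : A Fin.elim0 = A default := congrArg A (Subsingleton.elim _ _)
        rw [hA])
    rw [h1]
    simp
  | succ n ih =>
    have : ∀ A : Config d (n+1), lik θ lam d (n+1) i A
        = ∏ j : Fin d, ∑ k : Fin 4, trans θ lam i k * lik θ lam d n k (restrict j A) :=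
      fun A => rfl
    simp_rw [this]
    rw [sum_config_succ (fun j B => ∑ k : Fin 4, trans θ lam i k * lik θ lam d n k B)]
    have inner : ∀ j : Fin d, (∑ B : Config d n, ∑ k : Fin 4,
        trans θ lam i k * lik θ lam d n k B) = 1 := by
      intro j
      rw [Finset.sum_comm]
      simp_rw [← Finset.mul_sum, ih, mul_one, sum_trans]
    rw [Finset.prod_congr rfl (fun j _ => inner j), Finset.prod_const_one]

lemma marg_nonneg (hθ : θ ∈ Set.Ioo (0:ℝ) 1) (hP : ∀ i j : Fin 4, 0 ≤ trans θ lam i j)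
    (n : ℕ) (A : Config d n) : 0 ≤ marg θ lam d n A :=
  Finset.sum_nonneg fun i _ => mul_nonneg (rootDist_pos hθ i).le (lik_nonneg hP n i A)

lemma sum_marg (n : ℕ) : ∑ A : Config d n, marg θ lam d n A = 1 := by
  unfold marg
  rw [Finset.sum_comm]
  simp_rw [← Finset.mul_sum, sum_lik, mul_one, sum_rootDist]

lemma lik_le_marg (hθ : θ ∈ Set.Ioo (0:ℝ) 1) (hP : ∀ i j : Fin 4, 0 ≤ trans θ lam i j)
    (n : ℕ) (i : Fin 4) (A : Config d n) :
    rootDist θ i * lik θ lam d n i A ≤ marg θ lam d n A :=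
  Finset.single_le_sum (fun k _ => mul_nonneg (rootDist_pos hθ k).le (lik_nonneg hP n k A))
    (Finset.mem_univ i)

lemma lik_eq_zero (hθ : θ ∈ Set.Ioo (0:ℝ) 1) (hP : ∀ i j : Fin 4, 0 ≤ trans θ lam i j)
    (n : ℕ) (i : Fin 4) (A : Config d n) (h : marg θ lam d n A = 0) :
    lik θ lam d n i A = 0 := by
  have h1 := lik_le_marg hθ hP n i A
  have h2 := lik_nonneg hP n i A
  have h3 := (rootDist_pos hθ i)
  nlinarith

lemma key_id (hθ : θ ∈ Set.Ioo (0:ℝ) 1) (hP : ∀ i j : Fin 4, 0 ≤ trans θ lam i j)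
    (n : ℕ) (i : Fin 4) (A : Config d n) :
    rootDist θ i * lik θ lam d n i A = marg θ lam d n A * post θ lam d n i A := by
  unfold post
  rcases eq_or_ne (marg θ lam d n A) 0 with h | h
  · rw [h, lik_eq_zero hθ hP n i A h]; ring
  · field_simp

lemma post_nonneg (hθ : θ ∈ Set.Ioo (0:ℝ) 1) (hP : ∀ i j : Fin 4, 0 ≤ trans θ lam i j)
    (n : ℕ) (i : Fin 4) (A : Config d n) : 0 ≤ post θ lam d n i A :=
  div_nonneg (mul_nonneg (rootDist_pos hθ i).le (lik_nonneg hP n i A)) (marg_nonneg hθ hP n A)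

lemma post_le_one (hθ : θ ∈ Set.Ioo (0:ℝ) 1) (hP : ∀ i j : Fin 4, 0 ≤ trans θ lam i j)
    (n : ℕ) (i : Fin 4) (A : Config d n) : post θ lam d n i A ≤ 1 := by
  unfold post
  rcases eq_or_ne (marg θ lam d n A) 0 with h | h
  · simp [h]
  · rw [div_le_one (lt_of_le_of_ne (marg_nonneg hθ hP n A) (Ne.symm h))]
    exact lik_le_marg hθ hP n i A

lemma abs_post_sub_le_one (hθ : θ ∈ Set.Ioo (0:ℝ) 1) (hP : ∀ i j : Fin 4, 0 ≤ trans θ lam i j)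
    (n : ℕ) (i : Fin 4) (A : Config d n) : |post θ lam d n i A - rootDist θ i| ≤ 1 := by
  have h1 := post_nonneg hθ hP n i A
  have h2 := post_le_one hθ hP n i A
  have h3 := rootDist_pos hθ i
  have h4 := rootDist_le_one hθ i
  rw [abs_le]; constructor <;> linarith

lemma sum_marg_post (hθ : θ ∈ Set.Ioo (0:ℝ) 1) (hP : ∀ i j : Fin 4, 0 ≤ trans θ lam i j)
    (n : ℕ) (i : Fin 4) :
    ∑ A : Config d n, marg θ lam d n A * post θ lam d n i A = rootDist θ i := by
  simp_rw [← key_id hθ hP n i, ← Finset.mul_sum, sum_lik, mul_one]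

lemma var_id (hθ : θ ∈ Set.Ioo (0:ℝ) 1) (hP : ∀ i j : Fin 4, 0 ≤ trans θ lam i j)
    (n : ℕ) (i : Fin 4) :
    ∑ A : Config d n, marg θ lam d n A * (post θ lam d n i A - rootDist θ i) ^ 2
      = rootDist θ i *
        (condE θ lam d n i (fun A => post θ lam d n i A) - rootDist θ i) := by
  have expand : ∀ A : Config d n,
      marg θ lam d n A * (post θ lam d n i A - rootDist θ i) ^ 2
      = rootDist θ i * (lik θ lam d n i A * post θ lam d n i A)
        - 2 * rootDist θ i * (marg θ lam d n A * post θ lam d n i A)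
        + rootDist θ i ^ 2 * marg θ lam d n A := by
    intro A
    have hk := key_id hθ hP n i A
    linear_combination (-(post θ lam d n i A)) * hk
  simp_rw [expand]
  rw [Finset.sum_add_distrib, Finset.sum_sub_distrib, ← Finset.mul_sum, ← Finset.mul_sum,
    ← Finset.mul_sum, sum_marg_post hθ hP n i, sum_marg]
  unfold condE
  ring

lemma trans_perm (s : Equiv.Perm (Fin 4)) (hs : ∀ i, rootDist θ (s i) = rootDist θ i)
    (i j : Fin 4) : trans θ lam (s i) (s j) = trans θ lam i j := by
  unfold trans
  rw [hs j]
  congr 1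
  simp [Equiv.apply_eq_iff_eq]

lemma lik_perm (s : Equiv.Perm (Fin 4)) (hs : ∀ i, rootDist θ (s i) = rootDist θ i)
    (n : ℕ) (i : Fin 4) (A : Config d n) :
    lik θ lam d n (s i) (fun p => s (A p)) = lik θ lam d n i A := by
  induction n generalizing i with
  | zero =>
    show (if s (A Fin.elim0) = s i then (1:ℝ) else 0) = if A Fin.elim0 = i then 1 else 0
    simp [Equiv.apply_eq_iff_eq]
  | succ n ih =>
    show (∏ j : Fin d, ∑ k : Fin 4, trans θ lam (s i) k
          * lik θ lam d n k (restrict j (fun p => s (A p))))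
        = ∏ j : Fin d, ∑ k : Fin 4, trans θ lam i k * lik θ lam d n k (restrict j A)
    refine Finset.prod_congr rfl fun j _ => ?_
    rw [← Equiv.sum_comp s (fun k => trans θ lam (s i) k
      * lik θ lam d n k (restrict j (fun p => s (A p))))]
    refine Finset.sum_congr rfl fun k _ => ?_
    rw [trans_perm s hs i k]
    congr 1
    have hr : restrict j (fun p => s (A p)) = fun p => s (restrict j A p) := rfl
    rw [hr]
    exact ih k (restrict j A)

lemma marg_perm (s : Equiv.Perm (Fin 4)) (hs : ∀ i, rootDist θ (s i) = rootDist θ i)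
    (n : ℕ) (A : Config d n) :
    marg θ lam d n (fun p => s (A p)) = marg θ lam d n A := by
  unfold marg
  rw [← Equiv.sum_comp s (fun i => rootDist θ i * lik θ lam d n i (fun p => s (A p)))]
  exact Finset.sum_congr rfl fun i _ => by rw [hs i, lik_perm s hs n i A]

lemma post_perm (s : Equiv.Perm (Fin 4)) (hs : ∀ i, rootDist θ (s i) = rootDist θ i)
    (n : ℕ) (i : Fin 4) (A : Config d n) :
    post θ lam d n (s i) (fun p => s (A p)) = post θ lam d n i A := by
  unfold post
  rw [hs i, lik_perm s hs n i A, marg_perm s hs n A]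

lemma condE_post_perm (s : Equiv.Perm (Fin 4)) (hs : ∀ i, rootDist θ (s i) = rootDist θ i)
    (n : ℕ) (i : Fin 4) :
    condE θ lam d n (s i) (fun A => post θ lam d n (s i) A)
      = condE θ lam d n i (fun A => post θ lam d n i A) := by
  unfold condE
  have e : Config d n ≃ Config d n := Equiv.piCongrRight fun _ => s
  rw [← Equiv.sum_comp (Equiv.piCongrRight fun _ : Vtx d n => s)
    (fun A => lik θ lam d n (s i) A * post θ lam d n (s i) A)]
  refine Finset.sum_congr rfl fun A _ => ?_
  have hA : (Equiv.piCongrRight fun _ : Vtx d n => s) A = fun p => s (A p) := rfl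
  rw [hA, lik_perm s hs n i A, post_perm s hs n i A]

lemma rootDist_swap01 (i : Fin 4) : rootDist θ (Equiv.swap 0 1 i) = rootDist θ i := by
  have h : ∀ j : Fin 4, (((Equiv.swap 0 1 j : Fin 4) : ℕ) < 2 ↔ (j : ℕ) < 2) := by decide
  unfold rootDist
  exact if_congr (h i) rfl rfl

lemma rootDist_swap23 (i : Fin 4) : rootDist θ (Equiv.swap 2 3 i) = rootDist θ i := by
  have h : ∀ j : Fin 4, (((Equiv.swap 2 3 j : Fin 4) : ℕ) < 2 ↔ (j : ℕ) < 2) := by decide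
  unfold rootDist
  exact if_congr (h i) rfl rfl

lemma condE_post_one_eq_zero (n : ℕ) :
    condE θ lam d n 1 (fun A => post θ lam d n 1 A)
      = condE θ lam d n 0 (fun A => post θ lam d n 0 A) := by
  have h := condE_post_perm (θ:=θ) (lam:=lam) (d:=d) (Equiv.swap 0 1) rootDist_swap01 n 0
  simpa using h

lemma condE_post_three_eq_two (n : ℕ) :
    condE θ lam d n 3 (fun A => post θ lam d n 3 A)
      = condE θ lam d n 2 (fun A => post θ lam d n 2 A) := by
  have h := condE_post_perm (θ:=θ) (lam:=lam) (d:=d) (Equiv.swap 2 3) rootDist_swap23 n 2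
  simpa using h

end Aux

/-- `∑_A marg(A) |post_i(A) - π_i|`, the L¹ deviation of the posterior. -/
noncomputable def absDev (θ lam : ℝ) (d n : ℕ) (i : Fin 4) : ℝ :=
  ∑ A : Config d n, marg θ lam d n A * |post θ lam d n i A - rootDist θ i|

/-- `x_i(n) = E f_n(i, σ^i(n)) - π_i`. -/
noncomputable def xgen (θ lam : ℝ) (d n : ℕ) (i : Fin 4) : ℝ :=
  condE θ lam d n i (fun A => post θ lam d n i A) - rootDist θ i

section Aux2

variable {θ lam : ℝ} {d : ℕ}

lemma absDev_nonneg (hθ : θ ∈ Set.Ioo (0:ℝ) 1) (hP : ∀ i j : Fin 4, 0 ≤ trans θ lam i j) (n : ℕ) (i : Fin 4) : 0 ≤ absDev θ lam d n i :=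
  Finset.sum_nonneg fun A _ => mul_nonneg (marg_nonneg hθ hP n A) (abs_nonneg _)

lemma var_eq_xgen (hθ : θ ∈ Set.Ioo (0:ℝ) 1) (hP : ∀ i j : Fin 4, 0 ≤ trans θ lam i j) (n : ℕ) (i : Fin 4) :
    ∑ A : Config d n, marg θ lam d n A * (post θ lam d n i A - rootDist θ i) ^ 2
      = rootDist θ i * xgen θ lam d n i := by
  rw [var_id hθ hP n i]; rfl

lemma xgen_nonneg (hθ : θ ∈ Set.Ioo (0:ℝ) 1) (hP : ∀ i j : Fin 4, 0 ≤ trans θ lam i j) (n : ℕ) (i : Fin 4) : 0 ≤ xgen θ lam d n i := by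
  have h := var_eq_xgen (d:=d) hθ hP n i
  have h2 : 0 ≤ ∑ A : Config d n, marg θ lam d n A * (post θ lam d n i A - rootDist θ i) ^ 2 :=
    Finset.sum_nonneg fun A _ => mul_nonneg (marg_nonneg hθ hP n A) (sq_nonneg _)
  have h3 := rootDist_pos hθ i
  nlinarith

lemma absDev_sq_le (hθ : θ ∈ Set.Ioo (0:ℝ) 1) (hP : ∀ i j : Fin 4, 0 ≤ trans θ lam i j) (n : ℕ) (i : Fin 4) :
    absDev θ lam d n i ^ 2 ≤ rootDist θ i * xgen θ lam d n i := by
  have cs := Finset.sum_mul_sq_le_sq_mul_sq Finset.univ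
    (fun A : Config d n => Real.sqrt (marg θ lam d n A))
    (fun A : Config d n => Real.sqrt (marg θ lam d n A) * |post θ lam d n i A - rootDist θ i|)
  have e1 : ∀ A : Config d n, Real.sqrt (marg θ lam d n A)
      * (Real.sqrt (marg θ lam d n A) * |post θ lam d n i A - rootDist θ i|)
      = marg θ lam d n A * |post θ lam d n i A - rootDist θ i| := by
    intro A
    rw [← mul_assoc, Real.mul_self_sqrt (marg_nonneg hθ hP n A)]
  have e2 : ∀ A : Config d n, Real.sqrt (marg θ lam d n A) ^ 2 = marg θ lam d n A :=
    fun A => Real.sq_sqrt (marg_nonneg hθ hP n A)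
  have e3 : ∀ A : Config d n, (Real.sqrt (marg θ lam d n A)
      * |post θ lam d n i A - rootDist θ i|) ^ 2
      = marg θ lam d n A * (post θ lam d n i A - rootDist θ i) ^ 2 := by
    intro A
    rw [mul_pow, e2, sq_abs]
  simp_rw [e1, e2, e3] at cs
  rw [sum_marg, one_mul, var_eq_xgen hθ hP n i] at cs
  exact cs

lemma absDev_le_sqrt (hθ : θ ∈ Set.Ioo (0:ℝ) 1) (hP : ∀ i j : Fin 4, 0 ≤ trans θ lam i j) (n : ℕ) (i : Fin 4) :
    absDev θ lam d n i ≤ Real.sqrt (rootDist θ i * xgen θ lam d n i) := by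
  rw [Real.le_sqrt (absDev_nonneg hθ hP n i)
    (mul_nonneg (rootDist_pos hθ i).le (xgen_nonneg hθ hP n i))]
  exact absDev_sq_le hθ hP n i

lemma sumAbsLik_le (hθ : θ ∈ Set.Ioo (0:ℝ) 1) (hP : ∀ i j : Fin 4, 0 ≤ trans θ lam i j) (n : ℕ) (i j : Fin 4) :
    ∑ A : Config d n, |lik θ lam d n i A - lik θ lam d n j A|
      ≤ absDev θ lam d n i / rootDist θ i + absDev θ lam d n j / rootDist θ j := by
  have hpi := rootDist_pos hθ i
  have hpj := rootDist_pos hθ j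
  have pointwise : ∀ A : Config d n, |lik θ lam d n i A - lik θ lam d n j A|
      ≤ marg θ lam d n A * |post θ lam d n i A - rootDist θ i| / rootDist θ i
        + marg θ lam d n A * |post θ lam d n j A - rootDist θ j| / rootDist θ j := by
    intro A
    have hki := key_id hθ hP n i A
    have hkj := key_id hθ hP n j A
    have hdi : lik θ lam d n i A
        = marg θ lam d n A * (post θ lam d n i A - rootDist θ i) / rootDist θ i
          + marg θ lam d n A := by
      field_simp
      linear_combination hki
    have hdj : lik θ lam d n j A
        = marg θ lam d n A * (post θ lam d n j A - rootDist θ j) / rootDist θ j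
          + marg θ lam d n A := by
      field_simp
      linear_combination hkj
    rw [hdi, hdj]
    have h1 : marg θ lam d n A * (post θ lam d n i A - rootDist θ i) / rootDist θ i
        + marg θ lam d n A
        - (marg θ lam d n A * (post θ lam d n j A - rootDist θ j) / rootDist θ j
          + marg θ lam d n A)
        = marg θ lam d n A * (post θ lam d n i A - rootDist θ i) / rootDist θ i
          - marg θ lam d n A * (post θ lam d n j A - rootDist θ j) / rootDist θ j := by
      ring
    rw [h1]
    refine (abs_sub _ _).trans (le_of_eq ?_)
    have hm := marg_nonneg hθ hP n A
    rw [abs_div, abs_mul, abs_of_nonneg hm, abs_of_pos hpi, abs_div, abs_mul,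
      abs_of_nonneg hm, abs_of_pos hpj]
  calc ∑ A : Config d n, |lik θ lam d n i A - lik θ lam d n j A|
      ≤ ∑ A : Config d n,
          (marg θ lam d n A * |post θ lam d n i A - rootDist θ i| / rootDist θ i
          + marg θ lam d n A * |post θ lam d n j A - rootDist θ j| / rootDist θ j) :=
        Finset.sum_le_sum fun A _ => pointwise A
    _ = absDev θ lam d n i / rootDist θ i + absDev θ lam d n j / rootDist θ j := by
        rw [Finset.sum_add_distrib, ← Finset.sum_div, ← Finset.sum_div]
        rfl

lemma marg_mul_abs_le (hθ : θ ∈ Set.Ioo (0:ℝ) 1) (hP : ∀ i j : Fin 4, 0 ≤ trans θ lam i j)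
    (n : ℕ) (i : Fin 4) (A : Config d n) :
    marg θ lam d n A * |post θ lam d n i A - rootDist θ i|
      ≤ rootDist θ i * ∑ j : Fin 4, |lik θ lam d n i A - lik θ lam d n j A| := by
  have hk := key_id hθ hP n i A
  have hpi := rootDist_pos hθ i
  have hm := marg_nonneg hθ hP n A
  have e1 : marg θ lam d n A * (post θ lam d n i A - rootDist θ i)
      = rootDist θ i * (lik θ lam d n i A - marg θ lam d n A) := by
    linear_combination (-1 : ℝ) * hk
  have e2 : lik θ lam d n i A - marg θ lam d n A
      = ∑ j : Fin 4, rootDist θ j * (lik θ lam d n i A - lik θ lam d n j A) := by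
    have h2 : ∀ j : Fin 4, rootDist θ j * (lik θ lam d n i A - lik θ lam d n j A)
        = rootDist θ j * lik θ lam d n i A - rootDist θ j * lik θ lam d n j A :=
      fun j => by ring
    rw [Finset.sum_congr rfl fun j _ => h2 j, Finset.sum_sub_distrib, ← Finset.sum_mul,
      sum_rootDist, one_mul]
    rfl
  calc marg θ lam d n A * |post θ lam d n i A - rootDist θ i|
      = |marg θ lam d n A * (post θ lam d n i A - rootDist θ i)| := by
        rw [abs_mul, abs_of_nonneg hm]
    _ = rootDist θ i * |∑ j : Fin 4, rootDist θ j
          * (lik θ lam d n i A - lik θ lam d n j A)| := by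
        rw [e1, e2, abs_mul, abs_of_pos hpi]
    _ ≤ rootDist θ i * ∑ j : Fin 4, |rootDist θ j
          * (lik θ lam d n i A - lik θ lam d n j A)| := by
        have := Finset.abs_sum_le_sum_abs
          (fun j : Fin 4 => rootDist θ j * (lik θ lam d n i A - lik θ lam d n j A)) Finset.univ
        exact mul_le_mul_of_nonneg_left this hpi.le
    _ ≤ rootDist θ i * ∑ j : Fin 4, |lik θ lam d n i A - lik θ lam d n j A| := by
        refine mul_le_mul_of_nonneg_left (Finset.sum_le_sum fun j _ => ?_) hpi.le
        rw [abs_mul, abs_of_pos (rootDist_pos hθ j)]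
        exact mul_le_of_le_one_left (abs_nonneg _) (rootDist_le_one hθ j)

lemma xgen_le_sum (hθ : θ ∈ Set.Ioo (0:ℝ) 1) (hP : ∀ i j : Fin 4, 0 ≤ trans θ lam i j)
    (n : ℕ) (i : Fin 4) :
    xgen θ lam d n i
      ≤ ∑ j : Fin 4, ∑ A : Config d n, |lik θ lam d n i A - lik θ lam d n j A| := by
  have hpi := rootDist_pos hθ i
  have hvar := var_eq_xgen (d:=d) hθ hP n i
  have hb : ∑ A : Config d n, marg θ lam d n A * (post θ lam d n i A - rootDist θ i) ^ 2
      ≤ absDev θ lam d n i := by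
    refine Finset.sum_le_sum fun A _ => ?_
    have h1 := abs_post_sub_le_one hθ hP n i A
    have h2 := abs_nonneg (post θ lam d n i A - rootDist θ i)
    have hm := marg_nonneg hθ hP n A
    have h3 : (post θ lam d n i A - rootDist θ i) ^ 2
        = |post θ lam d n i A - rootDist θ i| * |post θ lam d n i A - rootDist θ i| := by
      rw [abs_mul_abs_self, sq]
    calc marg θ lam d n A * (post θ lam d n i A - rootDist θ i) ^ 2
        = (marg θ lam d n A * |post θ lam d n i A - rootDist θ i|)
          * |post θ lam d n i A - rootDist θ i| := by rw [h3]; ring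
      _ ≤ (marg θ lam d n A * |post θ lam d n i A - rootDist θ i|) * 1 :=
          mul_le_mul_of_nonneg_left h1 (mul_nonneg hm h2)
      _ = marg θ lam d n A * |post θ lam d n i A - rootDist θ i| := by ring
  have hc : absDev θ lam d n i
      ≤ rootDist θ i * ∑ j : Fin 4, ∑ A : Config d n,
          |lik θ lam d n i A - lik θ lam d n j A| := by
    calc absDev θ lam d n i
        ≤ ∑ A : Config d n, rootDist θ i * ∑ j : Fin 4,
            |lik θ lam d n i A - lik θ lam d n j A| :=
          Finset.sum_le_sum fun A _ => marg_mul_abs_le hθ hP n i A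
      _ = rootDist θ i * ∑ j : Fin 4, ∑ A : Config d n,
            |lik θ lam d n i A - lik θ lam d n j A| := by
          rw [← Finset.mul_sum, Finset.sum_comm]
  have := hvar ▸ hb
  have h4 : rootDist θ i * xgen θ lam d n i
      ≤ rootDist θ i * ∑ j : Fin 4, ∑ A : Config d n,
          |lik θ lam d n i A - lik θ lam d n j A| := le_trans this hc
  exact le_of_mul_le_mul_left h4 hpi

end Aux2


section Main

variable {θ lam : ℝ} {d : ℕ}

lemma dTV_nonneg (n : ℕ) (i j : Fin 4) : 0 ≤ dTV θ lam d n i j :=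
  div_nonneg (Finset.sum_nonneg fun A _ => abs_nonneg _) two_pos.le

lemma dTV_le_one (hP : ∀ i j : Fin 4, 0 ≤ trans θ lam i j) (n : ℕ) (i j : Fin 4) :
    dTV θ lam d n i j ≤ 1 := by
  unfold dTV
  rw [div_le_one two_pos]
  calc ∑ A : Config d n, |lik θ lam d n i A - lik θ lam d n j A|
      ≤ ∑ A : Config d n, (lik θ lam d n i A + lik θ lam d n j A) := by
        refine Finset.sum_le_sum fun A _ => ?_
        have h1 := lik_nonneg hP n i A
        have h2 := lik_nonneg hP n j A
        rw [abs_sub_le_iff]; constructor <;> linarith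
    _ = 2 := by rw [Finset.sum_add_distrib, sum_lik, sum_lik]; norm_num

lemma sumAbs_eq_two_dTV (n : ℕ) (i j : Fin 4) :
    ∑ A : Config d n, |lik θ lam d n i A - lik θ lam d n j A| = 2 * dTV θ lam d n i j := by
  unfold dTV; ring


/-- The broadcasting process is non-reconstructible if and only if
`x_{n;θ} → 0` and `x_{n;1-θ} → 0`. -/
theorem nonreconstruction_iff (θ lam : ℝ) (hθ : θ ∈ Set.Ioo (0 : ℝ) 1) (hlam : |lam| ≤ 1)
    (hP : ∀ i j : Fin 4, 0 ≤ trans θ lam i j) (d : ℕ) (hd : 2 ≤ d) :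
    ¬ Reconstructible θ lam d ↔
      (Filter.Tendsto (fun n => xT θ lam d n) Filter.atTop (nhds 0) ∧
       Filter.Tendsto (fun n => xH θ lam d n) Filter.atTop (nhds 0)) := by
  have h0 : rootDist θ 0 = θ / 2 := if_pos (by decide)
  have h1 : rootDist θ 1 = θ / 2 := if_pos (by decide)
  have h2 : rootDist θ 2 = (1 - θ) / 2 := if_neg (by decide)
  have h3 : rootDist θ 3 = (1 - θ) / 2 := if_neg (by decide)
  have hxTg : ∀ n, xT θ lam d n = xgen θ lam d n 0 := by
    intro n; unfold xT xgen; rw [h0]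
  have hxHg : ∀ n, xH θ lam d n = xgen θ lam d n 2 := by
    intro n; unfold xH xgen; rw [h2]
  constructor
  · intro hnr
    have hlims : ∀ i j : Fin 4, limsup (fun n => dTV θ lam d n i j) atTop ≤ 0 := by
      intro i j
      by_contra h
      exact hnr ⟨i, j, not_le.mp h⟩
    have hd0 : ∀ i j : Fin 4, Tendsto (fun n => dTV θ lam d n i j) atTop (nhds 0) := by
      intro i j
      have hb0 : ∀ n, 0 ≤ dTV θ lam d n i j := fun n => dTV_nonneg n i j
      have hb1 : ∀ n, dTV θ lam d n i j ≤ 1 := fun n => dTV_le_one hP n i j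
      refine tendsto_of_le_liminf_of_limsup_le ?_ (hlims i j)
        (isBoundedUnder_of ⟨1, hb1⟩) (isBoundedUnder_of ⟨0, fun n => hb0 n⟩)
      exact le_liminf_of_le ((isBoundedUnder_of ⟨1, hb1⟩).isCoboundedUnder_ge)
        (Eventually.of_forall hb0)
    have key : ∀ i : Fin 4, Tendsto (fun n => xgen θ lam d n i) atTop (nhds 0) := by
      intro i
      have upper : ∀ n, xgen θ lam d n i ≤ ∑ j : Fin 4, 2 * dTV θ lam d n i j := by
        intro n
        refine (xgen_le_sum hθ hP n i).trans (le_of_eq ?_)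
        exact Finset.sum_congr rfl fun j _ => sumAbs_eq_two_dTV n i j
      refine squeeze_zero (fun n => xgen_nonneg hθ hP n i) upper ?_
      have ht : Tendsto (fun n => ∑ j : Fin 4, 2 * dTV θ lam d n i j) atTop
          (nhds (∑ _j : Fin 4, (0:ℝ))) :=
        tendsto_finset_sum _ fun j _ => by simpa using (hd0 i j).const_mul 2
      simpa using ht
    constructor
    · simpa only [hxTg] using key 0
    · simpa only [hxHg] using key 2
  · rintro ⟨hT, hH⟩ ⟨i, j, hpos⟩
    have hx10 : ∀ n, xgen θ lam d n 1 = xgen θ lam d n 0 := by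
      intro n; unfold xgen; rw [condE_post_one_eq_zero, h1, h0]
    have hx32 : ∀ n, xgen θ lam d n 3 = xgen θ lam d n 2 := by
      intro n; unfold xgen; rw [condE_post_three_eq_two, h3, h2]
    have hx : ∀ i : Fin 4, Tendsto (fun n => xgen θ lam d n i) atTop (nhds 0) := by
      intro i
      fin_cases i
      · show Tendsto (fun n => xgen θ lam d n 0) atTop (nhds 0)
        simpa only [← hxTg] using hT
      · show Tendsto (fun n => xgen θ lam d n 1) atTop (nhds 0)
        simp only [hx10]
        simpa only [← hxTg] using hT
      · show Tendsto (fun n => xgen θ lam d n 2) atTop (nhds 0)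
        simpa only [← hxHg] using hH
      · show Tendsto (fun n => xgen θ lam d n 3) atTop (nhds 0)
        simp only [hx32]
        simpa only [← hxHg] using hH
    have hAD : ∀ i : Fin 4, Tendsto (fun n => absDev θ lam d n i) atTop (nhds 0) := by
      intro i
      refine squeeze_zero (fun n => absDev_nonneg hθ hP n i)
        (fun n => absDev_le_sqrt hθ hP n i) ?_
      have hmul : Tendsto (fun n => rootDist θ i * xgen θ lam d n i) atTop (nhds 0) := by
        simpa using (hx i).const_mul (rootDist θ i)
      have := hmul.sqrt
      simpa [Real.sqrt_zero] using this
    have hdt : Tendsto (fun n => dTV θ lam d n i j) atTop (nhds 0) := by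
      have upper : ∀ n, dTV θ lam d n i j
          ≤ (absDev θ lam d n i / rootDist θ i + absDev θ lam d n j / rootDist θ j) / 2 := by
        intro n
        have := sumAbsLik_le (d:=d) hθ hP n i j
        unfold dTV
        linarith
      refine squeeze_zero (fun n => dTV_nonneg n i j) upper ?_
      have ti := (hAD i).div_const (rootDist θ i)
      have tj := (hAD j).div_const (rootDist θ j)
      have := (ti.add tj).div_const 2
      simpa using this
    rw [hdt.limsup_eq] at hpos
    exact lt_irrefl 0 hpos


end Main

end Broadcast
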